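/- There exists a universal constant C > 0 such that for all R ∈ ℕ, ε > 0, α ∈ (0, 1/2], β ∈ (0,1), and n ≥ C·log(R/β)/(αε), there exists a pure ε-differentially private algorithm M from [R]ⁿ to distributions on [R] such that for every dataset S ∈ [R]ⁿ, with probability at least 1−β the output of M(S) is an α-robust minimum of S. -/

import Mathlib

/-- Two datasets differ in at most one entry. -/
def Neighboring {X : Type*} {n : ℕ} (S S' : Fin n → X) : Prop :=
  ∃ i : Fin n, ∀ j : Fin n, j ≠ i → S j = S' j

/-- Pure `ε`-differential privacy. -/
def PureDP {X : Type*} {n : ℕ} {R : Type*} (M : (Fin n → X) → PMF R) (ε : ℝ) : Prop :=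
  ∀ S S' : Fin n → X, Neighboring S S' → ∀ T : Set R,
    (M S).toOuterMeasure T ≤ ENNReal.ofReal (Real.exp ε) * (M S').toOuterMeasure T

/-- `r` is an `α`-robust minimum of `S ∈ [R]ⁿ`:
`|{i : x_i ≤ r}| ≥ αn` and `|{i : x_i < r}| ≤ 2αn`. -/
def RobustMin {n R : ℕ} (α : ℝ) (S : Fin n → Fin R) (r : Fin R) : Prop :=
  α * n ≤ ((Finset.univ.filter (fun i => S i ≤ r)).card : ℝ) ∧
  ((Finset.univ.filter (fun i => S i < r)).card : ℝ) ≤ 2 * α * n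

namespace S10
open Finset
variable {n R : ℕ}

def cntLE (S : Fin n → Fin R) (r : Fin R) : ℕ := (Finset.univ.filter (fun i => S i ≤ r)).card
def cntLT (S : Fin n → Fin R) (r : Fin R) : ℕ := (Finset.univ.filter (fun i => S i < r)).card

def sc (A B : ℕ) (S : Fin n → Fin R) (r : Fin R) : ℕ := max (A - cntLE S r) (cntLT S r - B)

noncomputable def wt (ε : ℝ) (A B : ℕ) (S : Fin n → Fin R) (r : Fin R) : ENNReal :=
  ENNReal.ofReal (Real.exp (-(ε/2) * sc A B S r))

noncomputable def W (ε : ℝ) (A B : ℕ) (S : Fin n → Fin R) : ENNReal := ∑ r, wt ε A B S r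

lemma wt_ne_zero (ε : ℝ) (A B : ℕ) (S : Fin n → Fin R) (r : Fin R) : wt ε A B S r ≠ 0 := by
  simp only [wt, ne_eq, ENNReal.ofReal_eq_zero, not_le]
  exact Real.exp_pos _

lemma wt_ne_top (ε : ℝ) (A B : ℕ) (S : Fin n → Fin R) (r : Fin R) : wt ε A B S r ≠ ⊤ :=
  ENNReal.ofReal_ne_top

lemma W_ne_zero (hR : 0 < R) (ε : ℝ) (A B : ℕ) (S : Fin n → Fin R) : W ε A B S ≠ 0 := by
  have : Nonempty (Fin R) := ⟨⟨0, hR⟩⟩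
  intro h
  rw [W, Finset.sum_eq_zero_iff] at h
  exact wt_ne_zero ε A B S (Classical.arbitrary _) (h _ (mem_univ _))

lemma W_ne_top (ε : ℝ) (A B : ℕ) (S : Fin n → Fin R) : W ε A B S ≠ ⊤ :=
  (ENNReal.sum_lt_top.mpr fun r _ => (wt_ne_top ε A B S r).lt_top).ne

lemma sum_p (hR : 0 < R) (ε : ℝ) (A B : ℕ) (S : Fin n → Fin R) :
    ∑ r, wt ε A B S r / W ε A B S = 1 := by
  simp only [div_eq_mul_inv, ← Finset.sum_mul]
  rw [← W, ENNReal.mul_inv_cancel (W_ne_zero hR ε A B S) (W_ne_top ε A B S)]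

lemma cnt_sens {S S' : Fin n → Fin R} (h : Neighboring S S') (p : Fin R → Prop) [DecidablePred p] :
    (Finset.univ.filter (fun i => p (S i))).card ≤ (Finset.univ.filter (fun i => p (S' i))).card + 1 := by
  obtain ⟨i, hi⟩ := h
  have hsub : (Finset.univ.filter (fun j => p (S j))) ⊆ insert i (Finset.univ.filter (fun j => p (S' j))) := by
    intro j hj
    simp only [mem_filter, mem_univ, true_and] at hj
    by_cases hji : j = i
    · simp [hji]
    · simp only [mem_insert, mem_filter, mem_univ, true_and]
      exact Or.inr (hi j hji ▸ hj)
  calc _ ≤ (insert i (Finset.univ.filter (fun j => p (S' j)))).card := Finset.card_le_card hsub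
    _ ≤ _ := Finset.card_insert_le _ _

lemma nbSymm {X : Type*} {S S' : Fin n → X} (h : Neighboring S S') : Neighboring S' S := by
  obtain ⟨i, hi⟩ := h; exact ⟨i, fun j hj => (hi j hj).symm⟩

lemma sc_sens {S S' : Fin n → Fin R} (h : Neighboring S S') (A B : ℕ) (r : Fin R) :
    sc A B S r ≤ sc A B S' r + 1 := by
  have h1 := cnt_sens h (fun x => x ≤ r)
  have h2 := cnt_sens (nbSymm h) (fun x => x ≤ r)
  have h3 := cnt_sens h (fun x => x < r)
  have h4 := cnt_sens (nbSymm h) (fun x => x < r)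
  simp only [sc, cntLE, cntLT] at *
  omega

lemma wt_sens {S S' : Fin n → Fin R} (h : Neighboring S S') {ε : ℝ} (hε : 0 ≤ ε) (A B : ℕ) (r : Fin R) :
    wt ε A B S r ≤ ENNReal.ofReal (Real.exp (ε/2)) * wt ε A B S' r := by
  rw [wt, wt, ← ENNReal.ofReal_mul (Real.exp_nonneg _), ← Real.exp_add]
  apply ENNReal.ofReal_le_ofReal
  apply Real.exp_le_exp.mpr
  have hs : (sc A B S' r : ℝ) ≤ sc A B S r + 1 := by
    exact_mod_cast sc_sens (nbSymm h) A B r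
  nlinarith [hs, hε]

lemma W_sens {S S' : Fin n → Fin R} (h : Neighboring S S') {ε : ℝ} (hε : 0 ≤ ε) (A B : ℕ) :
    W ε A B S ≤ ENNReal.ofReal (Real.exp (ε/2)) * W ε A B S' := by
  rw [W, W, Finset.mul_sum]
  exact Finset.sum_le_sum fun r _ => wt_sens h hε A B r

lemma p_sens {S S' : Fin n → Fin R} (h : Neighboring S S') {ε : ℝ} (hε : 0 ≤ ε) (A B : ℕ) (r : Fin R) :
    wt ε A B S r / W ε A B S ≤ ENNReal.ofReal (Real.exp ε) * (wt ε A B S' r / W ε A B S') := by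
  set c := ENNReal.ofReal (Real.exp (ε/2)) with hc
  have hc0 : c ≠ 0 := by simp [hc, Real.exp_pos]
  have hct : c ≠ ⊤ := ENNReal.ofReal_ne_top
  have h1 : wt ε A B S r ≤ c * wt ε A B S' r := wt_sens h hε A B r
  have h2 : W ε A B S' ≤ c * W ε A B S := W_sens (nbSymm h) hε A B
  have h3 : (W ε A B S)⁻¹ ≤ c * (W ε A B S')⁻¹ := by
    have := ENNReal.inv_le_inv.mpr h2
    rw [ENNReal.mul_inv (Or.inl hc0) (Or.inl hct)] at this
    calc (W ε A B S)⁻¹ = c * (c⁻¹ * (W ε A B S)⁻¹) := by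
          rw [← mul_assoc, ENNReal.mul_inv_cancel hc0 hct, one_mul]
      _ ≤ c * (W ε A B S')⁻¹ := mul_le_mul_right this c
  have hexp : ENNReal.ofReal (Real.exp ε) = c * c := by
    rw [hc, ← ENNReal.ofReal_mul (Real.exp_nonneg _), ← Real.exp_add]
    norm_num
  rw [div_eq_mul_inv, div_eq_mul_inv, hexp]
  calc wt ε A B S r * (W ε A B S)⁻¹ ≤ (c * wt ε A B S' r) * (c * (W ε A B S')⁻¹) :=
        mul_le_mul' h1 h3
    _ = c * c * (wt ε A B S' r * (W ε A B S')⁻¹) := by ring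

lemma cntLT_le_cntLE_of_lt (S : Fin n → Fin R) {r r' : Fin R} (h : r'.val + 1 = r.val) :
    cntLT S r ≤ cntLE S r' := by
  apply Finset.card_le_card
  apply Finset.monotone_filter_right
  intro i _ hi
  have : (S i).val < r.val := hi
  exact Fin.le_def.mpr (by omega)

lemma cntLE_top (hR : 0 < R) (S : Fin n → Fin R) : cntLE S ⟨R - 1, by omega⟩ = n := by
  rw [cntLE, Finset.filter_true_of_mem, Finset.card_univ, Fintype.card_fin]
  intro i _
  exact Fin.le_def.mpr (by have := (S i).isLt; simp; omega)

lemma witness (hR : 0 < R) {A : ℕ} (hA1 : 1 ≤ A) (hAn : A ≤ n) (S : Fin n → Fin R) :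
    ∃ r : Fin R, A ≤ cntLE S r ∧ cntLT S r < A := by
  classical
  set F := Finset.univ.filter (fun r : Fin R => A ≤ cntLE S r) with hF
  have hne : F.Nonempty := ⟨⟨R - 1, by omega⟩, by simp [hF, cntLE_top hR S, hAn]⟩
  refine ⟨F.min' hne, ?_, ?_⟩
  · have := Finset.min'_mem F hne
    simpa [hF] using this
  · rcases h0 : (F.min' hne).val with _ | k
    · have : cntLT S (F.min' hne) = 0 := by
        rw [cntLT, Finset.card_eq_zero, Finset.filter_eq_empty_iff]
        intro i _
        simp only [Fin.lt_def, h0]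
        omega
      omega
    · set r' : Fin R := ⟨k, by have := (F.min' hne).isLt; omega⟩ with hr'
      have hnm : r' ∉ F := by
        intro hmem
        have := Finset.min'_le F r' hmem
        rw [Fin.le_def] at this
        simp [hr'] at this
        omega
      have hlt : cntLE S r' < A := by
        by_contra hcon
        exact hnm (by simp [hF]; omega)
      have := cntLT_le_cntLE_of_lt S (r' := r') (r := F.min' hne) (by simp [hr', h0])
      omega

lemma nums (a : ℝ) (ha : 0 ≤ a) (g A B : ℕ) (hg : g = max 1 ⌈a/4⌉₊)
    (hA : A = ⌈a⌉₊ - 1 + g) (hB : B = ⌊2*a⌋₊ + 1 - g) :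
    (1 ≤ g) ∧ (a/4 ≤ (g:ℝ)) ∧ (a ≤ (A:ℝ)) ∧ ((B:ℝ) ≤ 2*a) ∧ (g ≤ ⌊2*a⌋₊ + 1)
      ∧ (A ≤ B + 1) ∧ (1 ≤ A) := by
  have hg1 : 1 ≤ g := hg ▸ le_max_left _ _
  have hgc : ⌈a/4⌉₊ ≤ g := hg ▸ le_max_right _ _
  have hga : a/4 ≤ (g:ℝ) := by
    refine le_trans (Nat.le_ceil _) ?_
    exact_mod_cast hgc
  have h2a : (⌊2*a⌋₊:ℝ) ≤ 2*a := Nat.floor_le (by linarith)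
  have hcf : ⌈a⌉₊ ≤ ⌊2*a⌋₊ + 1 :=
    le_trans (Nat.ceil_le_ceil (by linarith)) (Nat.ceil_le_floor_add_one _)
  have hgB : g ≤ ⌊2*a⌋₊ + 1 := by
    rw [hg]
    apply max_le
    · omega
    · exact le_trans (Nat.ceil_le_ceil (by linarith)) (Nat.ceil_le_floor_add_one _)
  have hAa : a ≤ (A:ℝ) := by
    rcases Nat.eq_zero_or_pos ⌈a⌉₊ with h | h
    · have : a ≤ 0 := by
        by_contra hc
        push_neg at hc
        exact absurd h (by positivity)
      have : (0:ℝ) ≤ (A:ℝ) := by positivity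
      linarith
    · have hA' : ⌈a⌉₊ ≤ A := by omega
      calc a ≤ (⌈a⌉₊:ℝ) := Nat.le_ceil a
        _ ≤ (A:ℝ) := by exact_mod_cast hA'
  have hBa : (B:ℝ) ≤ 2*a := by
    have hB' : B ≤ ⌊2*a⌋₊ := by omega
    calc (B:ℝ) ≤ (⌊2*a⌋₊:ℝ) := by exact_mod_cast hB'
      _ ≤ 2*a := h2a
  have hAB : A ≤ B + 1 := by
    by_cases h4 : a ≤ 4
    · have hc1 : ⌈a/4⌉₊ ≤ 1 := Nat.ceil_le.mpr (by norm_num; linarith)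
      have hgeq : g = 1 := by rw [hg]; omega
      omega
    · push_neg at h4
      have hgeq : g = ⌈a/4⌉₊ := by
        rw [hg]; exact max_eq_right (Nat.one_le_ceil_iff.mpr (by linarith))
      have h1 : (⌈a⌉₊:ℝ) < a + 1 := Nat.ceil_lt_add_one ha
      have h2 : (⌈a/4⌉₊:ℝ) < a/4 + 1 := Nat.ceil_lt_add_one (by linarith)
      have h3 : 2*a < (⌊2*a⌋₊:ℝ) + 1 := Nat.lt_floor_add_one _
      have hkey : ⌈a⌉₊ + 2*⌈a/4⌉₊ ≤ ⌊2*a⌋₊ + 3 := by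
        have : ((⌈a⌉₊ + 2*⌈a/4⌉₊ : ℕ):ℝ) < ((⌊2*a⌋₊ + 3 : ℕ):ℝ) := by
          push_cast; linarith
        exact_mod_cast this.le
      have hc1 : 1 ≤ ⌈a⌉₊ := Nat.one_le_ceil_iff.mpr (by linarith)
      omega
  have hA1 : 1 ≤ A := by omega
  exact ⟨hg1, hga, hAa, hBa, hgB, hAB, hA1⟩

lemma numsAn (a : ℝ) (ha : 0 ≤ a) (n : ℕ) (hn1 : 1 ≤ n) (h2an : 2*a ≤ n)
    (g : ℕ) (hg : g = max 1 ⌈a/4⌉₊) : ⌈a⌉₊ - 1 + g ≤ n := by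
  by_cases h4 : a ≤ 4
  · have hc1 : ⌈a/4⌉₊ ≤ 1 := Nat.ceil_le.mpr (by norm_num; linarith)
    have hcn : ⌈a⌉₊ ≤ n := Nat.ceil_le.mpr (by linarith)
    have hgeq : g = 1 := by rw [hg]; omega
    omega
  · push_neg at h4
    have hgeq : g = ⌈a/4⌉₊ := by
      rw [hg]; exact max_eq_right (Nat.one_le_ceil_iff.mpr (by linarith))
    have h1 : (⌈a⌉₊:ℝ) < a + 1 := Nat.ceil_lt_add_one ha
    have h2 : (⌈a/4⌉₊:ℝ) < a/4 + 1 := Nat.ceil_lt_add_one (by linarith)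
    have hc1 : 1 ≤ ⌈a⌉₊ := Nat.one_le_ceil_iff.mpr (by linarith)
    have hkey : ⌈a⌉₊ + ⌈a/4⌉₊ ≤ n + 1 := by
      have : ((⌈a⌉₊ + ⌈a/4⌉₊ : ℕ):ℝ) < ((n + 1 : ℕ):ℝ) := by push_cast; linarith
      exact_mod_cast this.le
    omega

end S10

theorem stmt_10 :
    ∃ C : ℝ, 0 < C ∧
      ∀ (R : ℕ), 1 ≤ R → ∀ (ε : ℝ), 0 < ε → ∀ α : ℝ, α ∈ Set.Ioc (0:ℝ) (1/2) →
      ∀ β : ℝ, β ∈ Set.Ioo (0:ℝ) 1 →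
      ∀ n : ℕ, C * Real.log ((R : ℝ) / β) / (α * ε) ≤ (n : ℝ) →
        ∃ M : (Fin n → Fin R) → PMF (Fin R),
          PureDP M ε ∧
          ∀ S : Fin n → Fin R, ENNReal.ofReal (1 - β) ≤
            (M S).toOuterMeasure {r : Fin R | RobustMin α S r} := by
  classical
  refine ⟨8, by norm_num, ?_⟩
  intro R hR ε hε α hα β hβ n hn
  obtain ⟨hα0, hα2⟩ := hα
  obtain ⟨hβ0, hβ1⟩ := hβ
  have hR0 : 0 < R := hR
  set a : ℝ := α * n with hadef
  have ha0 : 0 ≤ a := by positivity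
  set g : ℕ := max 1 ⌈a/4⌉₊ with hgdef
  set A : ℕ := ⌈a⌉₊ - 1 + g with hAdef
  set B : ℕ := ⌊2*a⌋₊ + 1 - g with hBdef
  obtain ⟨hg1, hga, hAa, hBa, hgB, hAB, hA1⟩ := S10.nums a ha0 g A B hgdef hAdef hBdef
  refine ⟨fun S => PMF.ofFintype (fun r => S10.wt ε A B S r / S10.W ε A B S)
      (S10.sum_p hR0 ε A B S), ?_, ?_⟩
  · -- privacy
    intro S S' hN T
    rw [PMF.toOuterMeasure_apply, PMF.toOuterMeasure_apply, tsum_fintype, tsum_fintype,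
      Finset.mul_sum]
    refine Finset.sum_le_sum fun r _ => ?_
    by_cases hr : r ∈ T
    · rw [Set.indicator_of_mem hr, Set.indicator_of_mem hr, PMF.ofFintype_apply,
        PMF.ofFintype_apply]
      exact S10.p_sens hN hε.le A B r
    · simp [Set.indicator_of_notMem hr]
  · -- utility
    intro S
    set G : Set (Fin R) := {r : Fin R | RobustMin α S r} with hG
    set MS : PMF (Fin R) := PMF.ofFintype (fun r => S10.wt ε A B S r / S10.W ε A B S)
      (S10.sum_p hR0 ε A B S) with hMS
    have hterm : ∀ r : Fin R, ¬ RobustMin α S r →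
        S10.wt ε A B S r / S10.W ε A B S ≤ ENNReal.ofReal (β / R) := by
      intro r hrob
      have hn1 : 1 ≤ n := by
        by_contra hc
        have hn0 : n = 0 := by omega
        apply hrob
        subst hn0
        constructor <;> simp
      have h2an : 2*a ≤ (n:ℝ) := by
        rw [hadef]
        have hn0' : (0:ℝ) ≤ n := Nat.cast_nonneg n
        nlinarith
      have hAn : A ≤ n := hAdef ▸ S10.numsAn a ha0 n hn1 h2an g hgdef
      obtain ⟨r₀, hr₀1, hr₀2⟩ := S10.witness hR0 hA1 hAn S
      have hsc0 : S10.sc A B S r₀ = 0 := by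
        rw [S10.sc, Nat.sub_eq_zero_of_le hr₀1, Nat.sub_eq_zero_of_le (by omega)]
        rfl
      have hW1 : 1 ≤ S10.W ε A B S := by
        calc (1:ENNReal) = S10.wt ε A B S r₀ := by
              rw [S10.wt, hsc0]; norm_num
          _ ≤ _ := Finset.single_le_sum (f := fun r => S10.wt ε A B S r)
              (fun _ _ => zero_le) (Finset.mem_univ r₀)
      have hscg : g ≤ S10.sc A B S r := by
        rw [RobustMin, not_and_or] at hrob
        rcases hrob with h | h
        · push_neg at h
          have hlt : S10.cntLE S r < ⌈a⌉₊ := Nat.lt_ceil.mpr h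
          refine le_trans ?_ (le_max_left _ _)
          omega
        · push_neg at h
          have hlt : ⌊2*a⌋₊ < S10.cntLT S r := by
            apply (Nat.floor_lt (by linarith)).mpr
            calc 2*a = 2*α*n := by rw [hadef]; ring
              _ < _ := h
          refine le_trans ?_ (le_max_right _ _)
          omega
      have hexp : Real.exp (-(ε/2) * g) ≤ β / R := by
        have hRpos : (0:ℝ) < R := by exact_mod_cast hR0
        have hbR : 0 < β / R := by positivity
        rw [← Real.exp_log hbR]
        apply Real.exp_le_exp.mpr
        have hlogeq : Real.log (β / R) = - Real.log ((R:ℝ)/β) := by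
          rw [← Real.log_inv]
          congr 1
          field_simp
        rw [hlogeq]
        have h8 : 8 * Real.log ((R:ℝ)/β) ≤ n * (α*ε) := by
          rw [div_le_iff₀ (by positivity)] at hn
          linarith
        have hge : (ε/2) * (a/4) ≤ (ε/2) * g :=
          mul_le_mul_of_nonneg_left hga (by positivity)
        rw [hadef] at hge
        nlinarith
      calc S10.wt ε A B S r / S10.W ε A B S ≤ S10.wt ε A B S r / 1 :=
            ENNReal.div_le_div le_rfl hW1
        _ = S10.wt ε A B S r := by simp
        _ ≤ ENNReal.ofReal (β / R) := by
            rw [S10.wt]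
            apply ENNReal.ofReal_le_ofReal
            refine le_trans (Real.exp_le_exp.mpr ?_) hexp
            have hgs : (g:ℝ) ≤ S10.sc A B S r := by exact_mod_cast hscg
            nlinarith [hε.le]
    have hbad : MS.toOuterMeasure Gᶜ ≤ ENNReal.ofReal β := by
      rw [PMF.toOuterMeasure_apply, tsum_fintype]
      have hub : ∀ r : Fin R, (Gᶜ).indicator (⇑MS) r ≤ ENNReal.ofReal (β/R) := by
        intro r
        by_cases hr : r ∈ Gᶜ
        · rw [Set.indicator_of_mem hr, hMS, PMF.ofFintype_apply]
          exact hterm r hr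
        · rw [Set.indicator_of_notMem hr]
          exact zero_le
      calc ∑ r, (Gᶜ).indicator (⇑MS) r ≤ ∑ _r : Fin R, ENNReal.ofReal (β/R) :=
            Finset.sum_le_sum fun r _ => hub r
        _ = (R : ENNReal) * ENNReal.ofReal (β/R) := by
            rw [Finset.sum_const, Finset.card_univ, Fintype.card_fin, nsmul_eq_mul]
        _ = ENNReal.ofReal β := by
            rw [← ENNReal.ofReal_natCast R, ← ENNReal.ofReal_mul (by positivity)]
            congr 1
            field_simp
    have huniv : MS.toOuterMeasure Set.univ = 1 := by
      rw [PMF.toOuterMeasure_apply]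
      simp only [Set.indicator_univ]
      exact MS.tsum_coe
    have hsub : (1:ENNReal) ≤ MS.toOuterMeasure G + MS.toOuterMeasure Gᶜ := by
      rw [← huniv, ← Set.union_compl_self G]
      exact MeasureTheory.measure_union_le (μ := MS.toOuterMeasure) G Gᶜ
    calc ENNReal.ofReal (1-β) = 1 - ENNReal.ofReal β := by
          rw [ENNReal.ofReal_sub 1 hβ0.le, ENNReal.ofReal_one]
      _ ≤ 1 - MS.toOuterMeasure Gᶜ := tsub_le_tsub_left hbad 1
      _ ≤ MS.toOuterMeasure G := tsub_le_iff_right.mpr hsub
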